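/- The set of all order M-weakly compact operators from E to F is a closed vector subspace of the Banach space L(E, F) of bounded linear operators. -/

import Mathlib

open Filter Topology NormedSpace

open Filter Topology

section Defs

/-- A sequence in a lattice ordered group is pairwise disjoint. -/
def DisjSeq {G : Type*} [Lattice G] [AddCommGroup G] (y : ℕ → G) : Prop :=
  ∀ m n : ℕ, m ≠ n → |y m| ⊓ |y n| = 0

/-- The solid hull of a set. -/
def SolidHull {G : Type*} [Lattice G] [AddCommGroup G] (A : Set G) : Set G :=
  {z | ∃ a ∈ A, |z| ≤ |a|}

/-- A sequence is order bounded. -/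
def OrdBddSeq {G : Type*} [Preorder G] (y : ℕ → G) : Prop :=
  ∃ a b : G, ∀ n, a ≤ y n ∧ y n ≤ b

/-- A set is L-weakly compact: every disjoint sequence in its solid hull is norm null. -/
def LWCompactSet {G : Type*} [NormedAddCommGroup G] [Lattice G] (A : Set G) : Prop :=
  ∀ y : ℕ → G, (∀ n, y n ∈ SolidHull A) → DisjSeq y →
    Tendsto (fun n => ‖y n‖) atTop (𝓝 0)

/-- An operator is order L-weakly compact. -/
def OrderLWC {G H : Type*} [NormedAddCommGroup G] [Lattice G] [NormedSpace ℝ G]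
    [NormedAddCommGroup H] [Lattice H] [NormedSpace ℝ H] (T : G →L[ℝ] H) : Prop :=
  ∀ x : G, 0 ≤ x → LWCompactSet (T '' Set.Icc 0 x)

/-- An operator is L-weakly compact. -/
def LWC {X H : Type*} [NormedAddCommGroup X] [NormedSpace ℝ X]
    [NormedAddCommGroup H] [Lattice H] [NormedSpace ℝ H] (T : X →L[ℝ] H) : Prop :=
  LWCompactSet (T '' Metric.closedBall 0 1)

/-- An operator is M-weakly compact. -/
def MWC {G Y : Type*} [NormedAddCommGroup G] [Lattice G] [NormedSpace ℝ G]
    [NormedAddCommGroup Y] [NormedSpace ℝ Y] (T : G →L[ℝ] Y) : Prop :=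
  ∀ x : ℕ → G, (∃ C, ∀ n, ‖x n‖ ≤ C) → DisjSeq x →
    Tendsto (fun n => ‖T (x n)‖) atTop (𝓝 0)

/-- An operator is order M-weakly compact. -/
def OrderMWC {G H : Type*} [NormedAddCommGroup G] [Lattice G] [NormedSpace ℝ G]
    [NormedAddCommGroup H] [NormedSpace ℝ H] [Lattice (StrongDual ℝ H)]
    (T : G →L[ℝ] H) : Prop :=
  ∀ x : ℕ → G, (∀ n, ‖x n‖ ≤ 1) → DisjSeq x →
    ∀ f : ℕ → StrongDual ℝ H, OrdBddSeq f →
      Tendsto (fun n => f n (T (x n))) atTop (𝓝 0)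

/-- The norm is order continuous: every decreasing net with infimum `0` is norm null. -/
def OrderContinuousNorm (G : Type*) [NormedAddCommGroup G] [Lattice G] : Prop :=
  ∀ (ι : Type*) [Preorder ι] [Nonempty ι] [IsDirected ι (· ≤ ·)] (x : ι → G),
    Antitone x → IsGLB (Set.range x) 0 → Tendsto (fun i => ‖x i‖) atTop (𝓝 0)

/-- An operator between Banach lattices is order bounded. -/
def OrderBoundedOp {G H : Type*} [NormedAddCommGroup G] [Lattice G] [NormedSpace ℝ G]
    [NormedAddCommGroup H] [Lattice H] [NormedSpace ℝ H] (T : G →L[ℝ] H) : Prop :=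
  ∀ a b : G, ∃ c d : H, ∀ x : G, a ≤ x → x ≤ b → c ≤ T x ∧ T x ≤ d

/-- An operator into a Banach lattice is strong order bounded. -/
def StrongOrderBounded {X H : Type*} [NormedAddCommGroup X] [NormedSpace ℝ X]
    [NormedAddCommGroup H] [Lattice H] [NormedSpace ℝ H] (T : X →L[ℝ] H) : Prop :=
  ∃ a b : H, ∀ x : X, ‖x‖ ≤ 1 → a ≤ T x ∧ T x ≤ b

end Defs


lemma dual_norm_bdd {H : Type*} [NormedAddCommGroup H] [Lattice H] [HasSolidNorm H]
    [CovariantClass H H (· + ·) (· ≤ ·)] {f : ℕ → H} (hf : OrdBddSeq f) :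
    ∃ C, 0 ≤ C ∧ ∀ n, ‖f n‖ ≤ C := by
  obtain ⟨a, b, hab⟩ := hf
  refine ⟨‖|a| ⊔ |b|‖, norm_nonneg _, fun n => ?_⟩
  apply HasSolidNorm.solid
  have h0 : (0 : H) ≤ |a| ⊔ |b| := le_trans (abs_nonneg a) le_sup_left
  rw [abs_of_nonneg h0]
  refine abs_le'.2 ⟨le_trans (hab n).2 (le_trans (le_abs_self b) le_sup_right), ?_⟩
  have h1 : -(f n) ≤ -a := neg_le_neg_iff.2 (hab n).1
  exact le_trans h1 (le_trans (neg_le_abs a) le_sup_left)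

theorem stmt9 {E F : Type*} [NormedAddCommGroup E] [Lattice E] [IsOrderedAddMonoid E]
    [HasSolidNorm E] [NormedSpace ℝ E] [CompleteSpace E]
    [NormedAddCommGroup F] [Lattice F] [IsOrderedAddMonoid F] [HasSolidNorm F] [NormedSpace ℝ F] [CompleteSpace F]
    [Lattice (StrongDual ℝ F)] [HasSolidNorm (StrongDual ℝ F)]
    [CovariantClass (StrongDual ℝ F) (StrongDual ℝ F) (· + ·) (· ≤ ·)]
    (hF' : ∀ f : StrongDual ℝ F, 0 ≤ f ↔ ∀ y : F, 0 ≤ y → 0 ≤ f y) :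
    IsClosed {T : E →L[ℝ] F | OrderMWC T} ∧
    OrderMWC (0 : E →L[ℝ] F) ∧
    (∀ S T : E →L[ℝ] F, OrderMWC S → OrderMWC T → OrderMWC (S + T)) ∧
    (∀ (c : ℝ) (T : E →L[ℝ] F), OrderMWC T → OrderMWC (c • T)) := by
  have key : ∀ (T : E →L[ℝ] F), OrderMWC T ↔
      (∀ x : ℕ → E, (∀ n, ‖x n‖ ≤ 1) → DisjSeq x →
        ∀ f : ℕ → StrongDual ℝ F, OrdBddSeq f →
          Tendsto (fun n => f n (T (x n))) atTop (𝓝 0)) := fun _ => Iff.rfl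
  refine ⟨?_, ?_, ?_, ?_⟩
  · -- closedness
    refine isClosed_of_closure_subset ?_
    intro T hT x hx hd f hf
    obtain ⟨C, hC0, hC⟩ := dual_norm_bdd hf
    rw [Metric.tendsto_atTop]
    intro ε hε
    have hδ : 0 < ε / (2 * (C + 1)) := by positivity
    obtain ⟨S, hS, hTS⟩ := Metric.mem_closure_iff.1 hT (ε / (2 * (C + 1))) hδ
    have hS' := (hS x hx hd f hf)
    rw [Metric.tendsto_atTop] at hS'
    obtain ⟨N, hN⟩ := hS' (ε / 2) (by positivity)
    refine ⟨N, fun n hn => ?_⟩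
    have h1 : |f n (T (x n)) - f n (S (x n))| ≤ C * (ε / (2 * (C + 1))) := by
      have e1 : f n (T (x n)) - f n (S (x n)) = f n ((T - S) (x n)) := by
        simp [map_sub]
      rw [e1]
      calc |f n ((T - S) (x n))| ≤ ‖f n‖ * ‖(T - S) (x n)‖ := (f n).le_opNorm _
        _ ≤ C * (‖T - S‖ * ‖x n‖) :=
            mul_le_mul (hC n) ((T - S).le_opNorm _) (norm_nonneg _) hC0
        _ ≤ C * (ε / (2 * (C + 1))) := by
            refine mul_le_mul_of_nonneg_left ?_ hC0
            calc ‖T - S‖ * ‖x n‖ ≤ ‖T - S‖ * 1 :=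
                  mul_le_mul_of_nonneg_left (hx n) (norm_nonneg _)
              _ = dist T S := by rw [mul_one, dist_eq_norm]
              _ ≤ ε / (2 * (C + 1)) := le_of_lt hTS
    have h2 : C * (ε / (2 * (C + 1))) ≤ ε / 2 := by
      rw [mul_comm, div_mul_eq_mul_div, div_le_div_iff₀ (by positivity) (by norm_num)]
      nlinarith
    have h3 := hN n hn
    rw [Real.dist_eq, sub_zero] at h3 ⊢
    calc |f n (T (x n))| ≤ |f n (T (x n)) - f n (S (x n))| + |f n (S (x n))| := by
          have := abs_sub_abs_le_abs_sub (f n (T (x n))) (f n (S (x n)))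
          linarith [abs_sub_abs_le_abs_sub (f n (T (x n))) (f n (S (x n)))]
      _ < ε / 2 + ε / 2 := by linarith
      _ = ε := by ring
  · intro x hx hd f hf
    simp only [ContinuousLinearMap.zero_apply, map_zero]
    exact tendsto_const_nhds
  · intro S T hS hT x hx hd f hf
    have := (hS x hx hd f hf).add (hT x hx hd f hf)
    simpa using this
  · intro c T hT x hx hd f hf
    have := (hT x hx hd f hf).const_mul c
    simpa [mul_comm] using this
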